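/- Fix d ≥ 1, β > 0, L > 0. There exists a constant c = c(β,L,d) > 0 such that for every φ ∈ H_d(β,L;[0,1]^d) with sup_{x∈[0,1]^d} |φ(x)| ≤ 1 and every maximizer x* of |φ| over [0,1]^d, there is a radius r > 0 with: (a) the Lebesgue measure of B_{x*}(r) ∩ [0,1]^d is at least c·|φ(x*)|^{d/β}, and (b) |φ(x)| ≥ |φ(x*)|/2 for all x ∈ B_{x*}(r) ∩ [0,1]^d. -/

import Mathlib

open MeasureTheory

/-- The unit cube `[0,1]^d` in `ℝ^d`. -/
def unitCube (d : ℕ) : Set (EuclideanSpace ℝ (Fin d)) :=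
  {x | ∀ i, x i ∈ Set.Icc (0 : ℝ) 1}

/-- Multivariate Taylor polynomial of `f` at `y`, of order `k`, evaluated at `x`
(derivatives taken within `I`). -/
noncomputable def taylorPoly (d : ℕ) (f : EuclideanSpace ℝ (Fin d) → ℝ)
    (I : Set (EuclideanSpace ℝ (Fin d))) (k : ℕ) (y x : EuclideanSpace ℝ (Fin d)) : ℝ :=
  ∑ i ∈ Finset.range (k + 1),
    (i.factorial : ℝ)⁻¹ * iteratedFDerivWithin ℝ i f I y (fun _ => x - y)

/-- The isotropic Hölder class `H_d(β, L; I)`: for `β ≤ 1` the functions with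
`|f x − f y| ≤ L‖x − y‖₂^β`; for `β > 1` the `⌊β⌋`-times continuously differentiable
functions whose Taylor polynomial of order `⌊β⌋ = ⌈β⌉₊ - 1` (the largest integer strictly
smaller than `β`) approximates `f` to order `L‖x − y‖₂^β`. -/
def IsotropicHolder (d : ℕ) (β L : ℝ) (I : Set (EuclideanSpace ℝ (Fin d)))
    (f : EuclideanSpace ℝ (Fin d) → ℝ) : Prop :=
  if β ≤ 1 then
    ∀ x ∈ I, ∀ y ∈ I, |f x - f y| ≤ L * ‖x - y‖ ^ β
  else
    ContDiffOn ℝ (⌈β⌉₊ - 1 : ℕ) f I ∧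
      ∀ x ∈ I, ∀ y ∈ I, |f x - taylorPoly d f I (⌈β⌉₊ - 1) y x| ≤ L * ‖x - y‖ ^ β


open Metric

lemma coord_le (d : ℕ) (y : EuclideanSpace ℝ (Fin d)) (j : Fin d) : |y j| ≤ ‖y‖ := by
  rw [EuclideanSpace.norm_eq]
  rw [show |y j| = Real.sqrt (‖y j‖^2) by rw [Real.sqrt_sq_eq_abs, Real.norm_eq_abs, abs_abs]]
  exact Real.sqrt_le_sqrt (Finset.single_le_sum (f := fun i => ‖y i‖^2) (fun i _ => by positivity) (Finset.mem_univ j))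

lemma norm_le_sqrt (d : ℕ) (b : ℝ) (hb : 0 ≤ b) (y : EuclideanSpace ℝ (Fin d)) (h : ∀ j, |y j| ≤ b) :
    ‖y‖ ≤ Real.sqrt d * b := by
  rw [EuclideanSpace.norm_eq]
  have h1 : ∑ i : Fin d, ‖y i‖^2 ≤ ∑ _i : Fin d, b^2 := by
    apply Finset.sum_le_sum; intro i _
    have : ‖y i‖ ≤ b := by rw [Real.norm_eq_abs]; exact h i
    nlinarith [norm_nonneg (y i)]
  calc Real.sqrt (∑ i : Fin d, ‖y i‖^2) ≤ Real.sqrt (d * b^2) := by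
        apply Real.sqrt_le_sqrt; simpa using h1
    _ = Real.sqrt d * b := by rw [Real.sqrt_mul (by positivity), Real.sqrt_sq hb]

lemma eucl_decomp (d : ℕ) (y : EuclideanSpace ℝ (Fin d)) :
    y = ∑ j : Fin d, y j • EuclideanSpace.single j (1:ℝ) := by
  conv_lhs => rw [← (EuclideanSpace.basisFun (Fin d) ℝ).sum_repr y]
  simp [EuclideanSpace.basisFun_repr, EuclideanSpace.basisFun_apply]

lemma expand (d i : ℕ) (F : ContinuousMultilinearMap ℝ (fun _ : Fin i => EuclideanSpace ℝ (Fin d)) ℝ)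
    (y : EuclideanSpace ℝ (Fin d)) :
    F (fun _ => y) = ∑ j : Fin i → Fin d, (∏ m, y (j m)) * F (fun m => EuclideanSpace.single (j m) 1) := by
  have hy : (fun _ : Fin i => y) = fun _ : Fin i => ∑ jj : Fin d, y jj • EuclideanSpace.single jj (1:ℝ) := by
    funext m; exact eucl_decomp d y
  rw [hy]
  have := F.toMultilinearMap.map_sum (fun (_ : Fin i) (jj : Fin d) => y jj • EuclideanSpace.single jj (1:ℝ))
  simp only [ContinuousMultilinearMap.coe_coe] at this
  rw [this]
  apply Finset.sum_congr rfl
  intro j _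
  have := F.toMultilinearMap.map_smul_univ (fun m => y (j m)) (fun m => EuclideanSpace.single (j m) (1:ℝ))
  simp only [ContinuousMultilinearMap.coe_coe] at this
  rw [this, smul_eq_mul]

noncomputable def Pc (d k : ℕ) (a : ∀ i : Fin (k+1), (Fin (i:ℕ) → Fin d) → ℝ)
    (i : Fin (k+1)) (v : Fin d → ℝ) : ℝ :=
  ∑ j : Fin (i:ℕ) → Fin d, (∏ m, v (j m)) * a i j

lemma Pc_add (d k : ℕ) (a b : ∀ i : Fin (k+1), (Fin (i:ℕ) → Fin d) → ℝ) (i v) :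
    Pc d k (a + b) i v = Pc d k a i v + Pc d k b i v := by
  simp [Pc, mul_add, Finset.sum_add_distrib]

lemma Pc_smul (d k : ℕ) (c : ℝ) (a : ∀ i : Fin (k+1), (Fin (i:ℕ) → Fin d) → ℝ) (i v) :
    Pc d k (c • a) i v = c * Pc d k a i v := by
  simp only [Pc, Finset.mul_sum, Pi.smul_apply, smul_eq_mul]
  exact Finset.sum_congr rfl (fun j _ => by ring)

lemma Pc_homog (d k : ℕ) (a : ∀ i : Fin (k+1), (Fin (i:ℕ) → Fin d) → ℝ) (i : Fin (k+1))
    (t : ℝ) (v : Fin d → ℝ) : Pc d k a i (t • v) = t^(i:ℕ) * Pc d k a i v := by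
  simp only [Pc, Finset.mul_sum]
  apply Finset.sum_congr rfl
  intro j _
  have : (∏ m, (t • v) (j m)) = t^(i:ℕ) * ∏ m, v (j m) := by
    simp only [Pi.smul_apply, smul_eq_mul, Finset.prod_mul_distrib, Finset.prod_const]
    simp
  rw [this]; ring

lemma Pc_cont (d k : ℕ) (a : ∀ i : Fin (k+1), (Fin (i:ℕ) → Fin d) → ℝ) (i : Fin (k+1))
    {s : Set ℝ} : Continuous fun v : Fin d → s => Pc d k a i (fun j => (v j : ℝ)) := by
  apply continuous_finset_sum
  intro j _
  apply Continuous.mul _ continuous_const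
  apply continuous_finset_prod
  intro m _
  exact continuous_subtype_val.comp (continuous_apply (j m))

lemma fd_bound {E F : Type*} [NormedAddCommGroup E] [NormedSpace ℝ E] [FiniteDimensional ℝ E]
    [SeminormedAddCommGroup F] [NormedSpace ℝ F] (g : E →ₗ[ℝ] F) :
    ∃ C > (0:ℝ), ∀ x, ‖g x‖ ≤ C * ‖x‖ := by
  let G := LinearMap.toContinuousLinearMap g
  exact ⟨‖G‖ + 1, by positivity, fun x =>
    le_trans (G.le_opNorm x) (mul_le_mul_of_nonneg_right (by linarith) (norm_nonneg x))⟩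

set_option maxHeartbeats 1000000 in
lemma key (d k : ℕ) : ∃ C > (0:ℝ), ∀ (a : ∀ i : Fin (k+1), (Fin (i:ℕ) → Fin d) → ℝ) (S : ℝ),
    (∀ v : Fin d → ℝ, (∀ j, v j ∈ Set.Icc (0:ℝ) 1) → |∑ i, Pc d k a i v| ≤ S) →
    ∀ (i : Fin (k+1)) (v : Fin d → ℝ), (∀ j, |v j| ≤ 1) → |Pc d k a i v| ≤ C * S := by
  classical
  -- Step A+B packaged: vanishing on positive cube implies vanishing of each piece on [-1,1]^d
  have hvanish : ∀ (a : ∀ i : Fin (k+1), (Fin (i:ℕ) → Fin d) → ℝ),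
      (∀ v : Fin d → ℝ, (∀ j, v j ∈ Set.Icc (0:ℝ) 1) → ∑ i, Pc d k a i v = 0) →
      ∀ (i : Fin (k+1)) (v : Fin d → ℝ), (∀ j, |v j| ≤ 1) → Pc d k a i v = 0 := by
    intro a h0
    have hIccInf : (Set.Icc (0:ℝ) 1).Infinite := Set.Icc_infinite (by norm_num)
    -- Step A
    have stepA : ∀ (i : Fin (k+1)) (v : Fin d → ℝ), (∀ j, v j ∈ Set.Icc (0:ℝ) 1) →
        Pc d k a i v = 0 := by
      intro i v hv
      set p : Polynomial ℝ := ∑ i' : Fin (k+1), Polynomial.C (Pc d k a i' v) * Polynomial.X ^ (i':ℕ) with hp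
      have hroot : ∀ t ∈ Set.Icc (0:ℝ) 1, p.IsRoot t := by
        intro t ht
        have htv : ∀ j, (t • v) j ∈ Set.Icc (0:ℝ) 1 := by
          intro j
          have := hv j
          constructor
          · simpa using mul_nonneg ht.1 (hv j).1
          · simpa using mul_le_one₀ ht.2 (hv j).1 (hv j).2
        have := h0 (t • v) htv
        have heval : p.eval t = ∑ i' : Fin (k+1), Pc d k a i' v * t^(i':ℕ) := by
          simp [hp, Polynomial.eval_finset_sum]
        have hsum : ∑ i' : Fin (k+1), Pc d k a i' (t • v) = ∑ i' : Fin (k+1), t^(i':ℕ) * Pc d k a i' v := by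
          exact Finset.sum_congr rfl (fun i' _ => Pc_homog d k a i' t v)
        rw [hsum] at this
        unfold Polynomial.IsRoot
        rw [heval, ← this]
        exact Finset.sum_congr rfl (fun i' _ => mul_comm _ _)
      have hpz : p = 0 := by
        apply Polynomial.eq_zero_of_infinite_isRoot
        apply Set.Infinite.mono _ hIccInf
        intro t ht; exact hroot t ht
      have : p.coeff (i:ℕ) = Pc d k a i v := by
        rw [hp]
        rw [Polynomial.finset_sum_coeff]
        rw [Finset.sum_eq_single i]
        · simp [Polynomial.coeff_C_mul, Polynomial.coeff_X_pow]
        · intro i' _ hne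
          simp only [Polynomial.coeff_C_mul, Polynomial.coeff_X_pow]
          rw [if_neg (fun hc => hne (Fin.ext hc.symm))]
          ring
        · intro h; exact absurd (Finset.mem_univ i) h
      rw [← this, hpz]; simp
    -- Step B
    intro i v hv
    set vp : Fin d → ℝ := fun j => max (v j) 0 with hvp
    set vn : Fin d → ℝ := fun j => max (-(v j)) 0 with hvn
    set q : Polynomial ℝ := ∑ j : Fin (i:ℕ) → Fin d,
        (∏ m, (Polynomial.C (vp (j m)) + Polynomial.C (vn (j m)) * Polynomial.X)) * Polynomial.C (a i j) with hq
    have hqeval : ∀ t : ℝ, q.eval t = Pc d k a i (fun j => vp j + vn j * t) := by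
      intro t
      simp [hq, Polynomial.eval_finset_sum, Polynomial.eval_prod, Pc]
    have hroot : ∀ t ∈ Set.Icc (0:ℝ) 1, q.IsRoot t := by
      intro t ht
      unfold Polynomial.IsRoot
      rw [hqeval t]
      apply stepA
      intro j
      rcases le_total (v j) 0 with h | h
      · have : vp j = 0 := by simp [hvp, h]
        rw [this]
        have h1 : vn j = -(v j) := by simp [hvn, h]
        constructor
        · simp; nlinarith [ht.1, (abs_le.mp (hv j)).1, h1]
        · have := (abs_le.mp (hv j)).1
          rw [h1]; simp; nlinarith [ht.2]
      · have h1 : vn j = 0 := by simp [hvn, h]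
        have h2 : vp j = v j := by simp [hvp, h]
        rw [h1, h2]
        constructor
        · simp [h]
        · simp; nlinarith [(abs_le.mp (hv j)).2]
    have hqz : q = 0 := by
      apply Polynomial.eq_zero_of_infinite_isRoot
      apply Set.Infinite.mono _ hIccInf
      intro t ht; exact hroot t ht
    have : q.eval (-1) = Pc d k a i v := by
      rw [hqeval]
      congr 1
      funext j
      rcases le_total (v j) 0 with h | h <;> simp [hvp, hvn, h] <;> ring
    rw [hqz] at this
    simpa using this.symm

  -- Functional analysis: two linear maps into continuous function spaces
  let X1 := Fin d → (Set.Icc (0:ℝ) 1)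
  let X2 := Fin d → (Set.Icc (-1:ℝ) 1)
  let W := ∀ i : Fin (k+1), (Fin (i:ℕ) → Fin d) → ℝ
  let Psi : W →ₗ[ℝ] C(X1, ℝ) :=
    { toFun := fun a => ⟨fun v => ∑ i, Pc d k a i (fun j => (v j : ℝ)),
        continuous_finset_sum _ (fun i _ => Pc_cont d k a i)⟩
      map_add' := by
        intro a b; ext v
        show (∑ i, Pc d k (a + b) i fun j => (v j : ℝ)) = _
        rw [show (∑ i, Pc d k (a + b) i fun j => (v j : ℝ))
            = ∑ i, ((Pc d k a i fun j => (v j : ℝ)) + (Pc d k b i fun j => (v j : ℝ))) from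
          Finset.sum_congr rfl fun i _ => Pc_add d k a b i _, Finset.sum_add_distrib]
        rfl
      map_smul' := by
        intro c a; ext v
        show (∑ i, Pc d k (c • a) i fun j => (v j : ℝ)) = _
        rw [show (∑ i, Pc d k (c • a) i fun j => (v j : ℝ))
            = ∑ i, c * (Pc d k a i fun j => (v j : ℝ)) from
          Finset.sum_congr rfl fun i _ => Pc_smul d k c a i _, ← Finset.mul_sum]
        rfl }
  let Psi' : W →ₗ[ℝ] (Fin (k+1) → C(X2, ℝ)) :=
    { toFun := fun a => fun i => ⟨fun v => Pc d k a i (fun j => (v j : ℝ)), Pc_cont d k a i⟩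
      map_add' := by
        intro a b; funext i; ext v
        simp only [Pi.add_apply, ContinuousMap.add_apply, ContinuousMap.coe_mk]
        exact Pc_add d k a b i _
      map_smul' := by
        intro c a; funext i; ext v
        simp only [Pi.smul_apply, ContinuousMap.smul_apply, ContinuousMap.coe_mk,
          smul_eq_mul, RingHom.id_apply]
        exact Pc_smul d k c a i _ }
  have hker : LinearMap.ker Psi ≤ LinearMap.ker Psi' := by
    intro a ha
    rw [LinearMap.mem_ker] at ha ⊢
    have h0 : ∀ v : Fin d → ℝ, (∀ j, v j ∈ Set.Icc (0:ℝ) 1) → ∑ i, Pc d k a i v = 0 := by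
      intro v hv
      have := congrArg (fun f => ContinuousMap.toFun f (fun j => (⟨v j, hv j⟩ : Set.Icc (0:ℝ) 1))) ha
      exact this
    funext i; ext v
    have : Pc d k a i (fun j => ((v j : ℝ))) = 0 := by
      apply hvanish a h0
      intro j
      exact abs_le.mpr ⟨(v j).2.1, (v j).2.2⟩
    exact this
  let g : (LinearMap.range Psi) →ₗ[ℝ] (Fin (k+1) → C(X2, ℝ)) :=
    ((LinearMap.ker Psi).liftQ Psi' hker).comp (Psi.quotKerEquivRange.symm.toLinearMap)
  obtain ⟨C0, hC0, hG⟩ := fd_bound (E := LinearMap.range Psi) (F := Fin (k+1) → C(X2, ℝ)) g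
  have hfact : ∀ a : W, Psi' a = g ⟨Psi a, LinearMap.mem_range_self Psi a⟩ := by
    intro a
    have h1 : Psi.quotKerEquivRange (Submodule.Quotient.mk a) = ⟨Psi a, LinearMap.mem_range_self Psi a⟩ :=
      Subtype.ext (by exact Psi.quotKerEquivRange_apply_mk a)
    have h2 : Psi.quotKerEquivRange.symm ⟨Psi a, LinearMap.mem_range_self Psi a⟩
        = Submodule.Quotient.mk a := by
      rw [LinearEquiv.symm_apply_eq, h1]
    show Psi' a = g ⟨Psi a, LinearMap.mem_range_self Psi a⟩
    simp only [g, LinearMap.comp_apply, LinearEquiv.coe_toLinearMap, h2, Submodule.liftQ_apply]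
  refine ⟨C0, hC0, ?_⟩
  intro a S hS i v hv
  have hS0 : 0 ≤ S := by
    have := hS (fun _ => 0) (fun j => by norm_num)
    exact le_trans (abs_nonneg _) this
  have hPsinorm : ‖Psi a‖ ≤ S := by
    rw [ContinuousMap.norm_le _ hS0]
    intro w
    show ‖∑ i', Pc d k a i' (fun j => ((w j : ℝ)))‖ ≤ S
    rw [Real.norm_eq_abs]
    exact hS _ (fun j => (w j).2)
  have hnorm' : ‖Psi' a‖ ≤ C0 * S := by
    rw [hfact a]
    calc ‖g ⟨Psi a, LinearMap.mem_range_self Psi a⟩‖ ≤ C0 * ‖(⟨Psi a, LinearMap.mem_range_self Psi a⟩ : LinearMap.range Psi)‖ :=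
          hG _
      _ ≤ C0 * S := by
          apply mul_le_mul_of_nonneg_left _ hC0.le
          simpa using hPsinorm
  have hv2 : ∀ j, v j ∈ Set.Icc (-1:ℝ) 1 := fun j => ⟨(abs_le.mp (hv j)).1, (abs_le.mp (hv j)).2⟩
  have : |Pc d k a i v| = ‖(Psi' a i) (fun j => (⟨v j, hv2 j⟩ : Set.Icc (-1:ℝ) 1))‖ := by
    simp [Psi']
  rw [this]
  calc ‖(Psi' a i) (fun j => (⟨v j, hv2 j⟩ : Set.Icc (-1:ℝ) 1))‖ ≤ ‖Psi' a i‖ :=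
        ContinuousMap.norm_coe_le_norm _ _
    _ ≤ ‖Psi' a‖ := norm_le_pi_norm (Psi' a) i
    _ ≤ C0 * S := hnorm'

lemma volume_step (d : ℕ) (c₁ : ℝ) (hc₁ : 0 < c₁) (q : ℝ) :
    ∃ c > (0:ℝ), ∀ M : ℝ, 0 < M → ∀ r : ℝ, 0 < r → c₁ * M ^ q ≤ r → r ≤ 1 →
      ∀ xs ∈ unitCube d,
      ENNReal.ofReal (c * M ^ (q * (d:ℝ))) ≤ volume (closedBall xs r ∩ unitCube d) := by
  classical
  set κ : ℝ := 4 * Real.sqrt d + 2 with hκ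
  have hκpos : 0 < κ := by positivity
  set V := volume (ball (0 : EuclideanSpace ℝ (Fin d)) 1) with hV
  have hVpos : 0 < V := measure_ball_pos _ _ one_pos
  have hVne : V ≠ ⊤ := measure_ball_lt_top.ne
  set vr : ℝ := min 1 V.toReal with hvr
  have hvrpos : 0 < vr := lt_min one_pos (ENNReal.toReal_pos hVpos.ne' hVne)
  have hvrV : ENNReal.ofReal vr ≤ V := by
    calc ENNReal.ofReal vr ≤ ENNReal.ofReal V.toReal := ENNReal.ofReal_le_ofReal (min_le_right _ _)
      _ = V := ENNReal.ofReal_toReal hVne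
  refine ⟨(c₁ / κ)^d * vr, by positivity, ?_⟩
  intro M hM r hr hrM hr1 xs hxs
  set ctr : EuclideanSpace ℝ (Fin d) := WithLp.toLp 2 (fun _ => (1/2 : ℝ)) with hctr
  set D : ℝ := ‖ctr - xs‖ with hD
  have hD0 : 0 ≤ D := norm_nonneg _
  have hDd : D ≤ Real.sqrt d := by
    have := norm_le_sqrt d 1 one_pos.le (ctr - xs) (fun j => by
      have h1 := (hxs j).1; have h2 := (hxs j).2
      have : (ctr - xs) j = 1/2 - xs j := by
        rw [PiLp.sub_apply]
      rw [this, abs_le]; constructor <;> linarith)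
    simpa using this
  set σ : ℝ := r / (2 * D + 1) with hσ
  have hσpos : 0 < σ := by positivity
  have hσ1 : σ ≤ 1 := by
    rw [hσ, div_le_one (by positivity)]; linarith
  set y0 : EuclideanSpace ℝ (Fin d) := xs + σ • (ctr - xs) with hy0
  have hsub1 : closedBall y0 (σ/2) ⊆ closedBall xs r := by
    intro z hz
    rw [mem_closedBall] at hz ⊢
    have h1 : dist z xs ≤ dist z y0 + dist y0 xs := dist_triangle _ _ _
    have h2 : dist y0 xs = σ * D := by
      rw [dist_eq_norm, hy0]
      have : xs + σ • (ctr - xs) - xs = σ • (ctr - xs) := by abel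
      rw [this, norm_smul, Real.norm_eq_abs, abs_of_pos hσpos]
    have : σ * (D + 1/2) ≤ r / 2 := by
      rw [hσ]
      rw [div_mul_eq_mul_div, div_le_div_iff₀ (by positivity) (by norm_num)]
      nlinarith
    calc dist z xs ≤ σ/2 + σ * D := by rw [h2] at h1; linarith [hz]
      _ ≤ r := by nlinarith
  have hsub2 : closedBall y0 (σ/2) ⊆ unitCube d := by
    intro z hz
    rw [mem_closedBall, dist_eq_norm] at hz
    intro j
    have hcj : |(z - y0) j| ≤ σ/2 := le_trans (coord_le d (z - y0) j) hz
    have hzj : z j = xs j + σ * (1/2 - xs j) + (z - y0) j := by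
      have : (z - y0) j = z j - y0 j := by rw [PiLp.sub_apply]
      have hy0j : y0 j = xs j + σ * (1/2 - xs j) := by
        rw [hy0]
        simp only [PiLp.add_apply, PiLp.smul_apply, PiLp.sub_apply, smul_eq_mul]
        rfl
      linarith [this]
    have h1 := (hxs j).1; have h2 := (hxs j).2
    have habs := abs_le.mp hcj
    constructor
    · rw [hzj]; nlinarith
    · rw [hzj]; nlinarith
  have hsub : closedBall y0 (σ/2) ⊆ closedBall xs r ∩ unitCube d :=
    Set.subset_inter hsub1 hsub2
  have hvol : volume (closedBall y0 (σ/2)) = ENNReal.ofReal ((σ/2)^d) * V := by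
    rw [Measure.addHaar_closedBall volume y0 (by positivity : (0:ℝ) ≤ σ/2)]
    rw [finrank_euclideanSpace_fin]
  have hineq : (c₁/κ)^d * vr * M ^ (q * (d:ℝ)) ≤ (σ/2)^d * vr := by
    have hMq : (0:ℝ) < M ^ q := Real.rpow_pos_of_pos hM _
    have hstep : c₁ * M ^ q / κ ≤ σ / 2 := by
      have hs2 : σ/2 = r / ((2*D + 1)*2) := by rw [hσ, div_div]
      rw [hs2]
      calc c₁ * M^q / κ ≤ r / κ := by gcongr
      _ ≤ r / ((2*D+1)*2) := by
            apply div_le_div_of_nonneg_left hr.le (by positivity)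
            rw [hκ]; nlinarith
    have hMqd : (M ^ q)^(d:ℕ) = M ^ (q * (d:ℝ)) := by
      rw [← Real.rpow_natCast (M ^ q) d, ← Real.rpow_mul hM.le]
    have : ((c₁ * M^q)/κ)^d ≤ (σ/2)^d := by
      apply pow_le_pow_left₀ (by positivity) hstep
    have hexp : ((c₁ * M^q)/κ)^d = (c₁/κ)^d * M ^ (q * (d:ℝ)) := by
      rw [← hMqd, div_pow, mul_pow, div_pow]
      ring
    rw [hexp] at this
    calc (c₁/κ)^d * vr * M ^ (q*(d:ℝ)) = ((c₁/κ)^d * M ^ (q*(d:ℝ))) * vr := by ring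
      _ ≤ (σ/2)^d * vr := by
          apply mul_le_mul_of_nonneg_right this hvrpos.le
  calc ENNReal.ofReal ((c₁/κ)^d * vr * M ^ (q * (d:ℝ)))
      ≤ ENNReal.ofReal ((σ/2)^d * vr) := ENNReal.ofReal_le_ofReal hineq
    _ = ENNReal.ofReal ((σ/2)^d) * ENNReal.ofReal vr := ENNReal.ofReal_mul (by positivity)
    _ ≤ ENNReal.ofReal ((σ/2)^d) * V := by
        exact mul_le_mul_right hvrV _
    _ = volume (closedBall y0 (σ/2)) := hvol.symm
    _ ≤ volume (closedBall xs r ∩ unitCube d) := measure_mono hsub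

-- the trivial case |φ xstar| = 0
lemma zero_case (d : ℕ) (hd : 1 ≤ d) (β c : ℝ) (hβ : 0 < β)
    (φ : EuclideanSpace ℝ (Fin d) → ℝ) (xstar : EuclideanSpace ℝ (Fin d))
    (h0 : |φ xstar| = 0) :
    ∃ r > (0 : ℝ),
        ENNReal.ofReal (c * |φ xstar| ^ ((d : ℝ) / β)) ≤
            volume (Metric.closedBall xstar r ∩ unitCube d) ∧
          ∀ x ∈ Metric.closedBall xstar r ∩ unitCube d, |φ xstar| / 2 ≤ |φ x| := by
  refine ⟨1, one_pos, ?_, ?_⟩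
  · rw [h0, Real.zero_rpow (by
      have : (0:ℝ) < (d:ℝ)/β := by
        apply div_pos _ hβ; exact_mod_cast Nat.lt_of_lt_of_le Nat.zero_lt_one hd
      exact this.ne')]
    simp
  · intro x _
    rw [h0]
    simpa using abs_nonneg (φ x)

set_option maxHeartbeats 2000000 in
/-- There is a constant `c = c(β,L,d) > 0` such that for every `φ ∈ H_d(β,L;[0,1]^d)` with
`sup |φ| ≤ 1` and every maximizer `x*` of `|φ|` over `[0,1]^d`, there is a radius `r > 0`
with `λ(B_{x*}(r) ∩ [0,1]^d) ≥ c·|φ(x*)|^{d/β}` and `|φ(x)| ≥ |φ(x*)|/2` on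
`B_{x*}(r) ∩ [0,1]^d`. -/
theorem holder_plateau (d : ℕ) (hd : 1 ≤ d) (β L : ℝ) (hβ : 0 < β) (hL : 0 < L) :
    ∃ c > (0 : ℝ), ∀ φ : EuclideanSpace ℝ (Fin d) → ℝ,
      IsotropicHolder d β L (unitCube d) φ →
      (∀ x ∈ unitCube d, |φ x| ≤ 1) →
      ∀ xstar ∈ unitCube d, (∀ x ∈ unitCube d, |φ x| ≤ |φ xstar|) →
      ∃ r > (0 : ℝ),
        ENNReal.ofReal (c * |φ xstar| ^ ((d : ℝ) / β)) ≤
            volume (Metric.closedBall xstar r ∩ unitCube d) ∧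
          ∀ x ∈ Metric.closedBall xstar r ∩ unitCube d, |φ xstar| / 2 ≤ |φ x| := by
  have hd0 : (0:ℝ) < (d:ℝ) := by exact_mod_cast Nat.lt_of_lt_of_le Nat.zero_lt_one hd
  have hsd1 : 1 ≤ Real.sqrt d := by
    rw [show (1:ℝ) = Real.sqrt 1 from Real.sqrt_one.symm]
    exact Real.sqrt_le_sqrt (by exact_mod_cast hd)
  have hsd0 : 0 < Real.sqrt d := lt_of_lt_of_le one_pos hsd1
  have hexp : (d:ℝ)/β = (1/β) * (d:ℝ) := by ring
  by_cases hβ1 : β ≤ 1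
  · -- plain Hölder case
    set c₁ : ℝ := min (1/2 : ℝ) ((1/(2*L)) ^ ((1:ℝ)/β)) with hc₁def
    have hc₁pos : 0 < c₁ := lt_min (by norm_num) (Real.rpow_pos_of_pos (by positivity) _)
    obtain ⟨c, hc, hvol⟩ := volume_step d c₁ hc₁pos (1/β)
    refine ⟨c, hc, ?_⟩
    intro φ hHol hsup xstar hxstar hmax
    rw [IsotropicHolder, if_pos hβ1] at hHol
    rcases eq_or_lt_of_le (abs_nonneg (φ xstar)) with h0 | hM
    · exact zero_case d hd β c hβ φ xstar h0.symm
    set M := |φ xstar| with hMdef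
    have hM1 : M ≤ 1 := hsup xstar hxstar
    set r : ℝ := min (1/2 : ℝ) ((M/(2*L)) ^ ((1:ℝ)/β)) with hrdef
    have hrpos : 0 < r := lt_min (by norm_num) (Real.rpow_pos_of_pos (by positivity) _)
    have hr1 : r ≤ 1 := le_trans (min_le_left _ _) (by norm_num)
    have hMβ1 : M ^ ((1:ℝ)/β) ≤ 1 := Real.rpow_le_one (abs_nonneg _) hM1 (by positivity)
    have hrM : c₁ * M ^ ((1:ℝ)/β) ≤ r := by
      apply le_min
      · calc c₁ * M ^ ((1:ℝ)/β) ≤ c₁ * 1 := by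
              apply mul_le_mul_of_nonneg_left hMβ1 hc₁pos.le
          _ ≤ 1/2 := by rw [mul_one]; exact min_le_left _ _
      · calc c₁ * M ^ ((1:ℝ)/β) ≤ (1/(2*L)) ^ ((1:ℝ)/β) * M ^ ((1:ℝ)/β) := by
              apply mul_le_mul_of_nonneg_right (min_le_right _ _) (Real.rpow_nonneg (abs_nonneg _) _)
          _ = (M/(2*L)) ^ ((1:ℝ)/β) := by
              rw [← Real.mul_rpow (by positivity) (abs_nonneg _)]
              congr 1; field_simp; exact hMdef.symm
    refine ⟨r, hrpos, ?_, ?_⟩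
    · have := hvol M hM r hrpos hrM hr1 xstar hxstar
      rw [hexp]
      convert this using 3
    · intro x hx
      have hxb := hx.1
      rw [mem_closedBall, dist_eq_norm] at hxb
      have hHo := hHol x hx.2 xstar hxstar
      have hnorm : ‖x - xstar‖ ^ β ≤ r ^ β :=
        Real.rpow_le_rpow (norm_nonneg _) hxb hβ.le
      have hrβ : r ^ β ≤ M / (2*L) := by
        calc r ^ β ≤ ((M/(2*L)) ^ ((1:ℝ)/β)) ^ β :=
              Real.rpow_le_rpow hrpos.le (min_le_right _ _) hβ.le
          _ = (M/(2*L)) ^ (((1:ℝ)/β) * β) := (Real.rpow_mul (by positivity) _ _).symm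
          _ = M/(2*L) := by rw [one_div, inv_mul_cancel₀ hβ.ne', Real.rpow_one]
      have hfull : |φ x - φ xstar| ≤ M/2 := by
        calc |φ x - φ xstar| ≤ L * ‖x - xstar‖ ^ β := hHo
          _ ≤ L * (M/(2*L)) := by
              apply mul_le_mul_of_nonneg_left (le_trans hnorm hrβ) hL.le
          _ = M/2 := by field_simp
      have : M - |φ x| ≤ |φ x - φ xstar| := by
        have h1 : |φ xstar| - |φ x| ≤ |φ xstar - φ x| := abs_sub_abs_le_abs_sub _ _
        rw [abs_sub_comm] at h1
        exact h1
      linarith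
  · -- smooth case
    push_neg at hβ1
    have hβ1' : (1:ℝ) ≤ β := hβ1.le
    set k : ℕ := ⌈β⌉₊ - 1 with hkdef
    obtain ⟨C, hC, hkey⟩ := key d k
    set δ : ℝ := min (1/8 : ℝ) (1/(16*C*(k:ℝ) + 1)) with hδdef
    have hδpos : 0 < δ := lt_min (by norm_num) (by positivity)
    have hδ18 : δ ≤ 1/8 := min_le_left _ _
    have hδ1 : δ ≤ 1 := le_trans hδ18 (by norm_num)
    set c₁ : ℝ := δ * min (1/2 : ℝ) ((1/L) ^ ((1:ℝ)/β) / Real.sqrt d) with hc₁def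
    have hc₁pos : 0 < c₁ := by
      apply mul_pos hδpos
      exact lt_min (by norm_num) (div_pos (Real.rpow_pos_of_pos (by positivity) _) hsd0)
    obtain ⟨c, hc, hvol⟩ := volume_step d c₁ hc₁pos (1/β)
    refine ⟨c, hc, ?_⟩
    intro φ hHol hsup xstar hxstar hmax
    rw [IsotropicHolder, if_neg (not_le.mpr hβ1)] at hHol
    obtain ⟨-, hT⟩ := hHol
    rcases eq_or_lt_of_le (abs_nonneg (φ xstar)) with h0 | hM
    · exact zero_case d hd β c hβ φ xstar h0.symm
    set M := |φ xstar| with hMdef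
    have hM1 : M ≤ 1 := hsup xstar hxstar
    set H : ℝ := min (1/2 : ℝ) ((M/L) ^ ((1:ℝ)/β) / Real.sqrt d) with hHdef
    have hHpos : 0 < H :=
      lt_min (by norm_num) (div_pos (Real.rpow_pos_of_pos (by positivity) _) hsd0)
    have hH12 : H ≤ 1/2 := min_le_left _ _
    set r : ℝ := δ * H with hrdef
    have hrpos : 0 < r := mul_pos hδpos hHpos
    have hr1 : r ≤ 1 := by
      calc r ≤ (1/8) * (1/2) := mul_le_mul hδ18 hH12 hHpos.le (by norm_num)
        _ ≤ 1 := by norm_num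
    have hsdH : Real.sqrt d * H ≤ (M/L) ^ ((1:ℝ)/β) := by
      have := min_le_right (1/2 : ℝ) ((M/L) ^ ((1:ℝ)/β) / Real.sqrt d)
      calc Real.sqrt d * H ≤ Real.sqrt d * ((M/L) ^ ((1:ℝ)/β) / Real.sqrt d) := by
            apply mul_le_mul_of_nonneg_left this hsd0.le
        _ = (M/L) ^ ((1:ℝ)/β) := by field_simp
    have hLHβ : L * (Real.sqrt d * H) ^ β ≤ M := by
      have h1 : (Real.sqrt d * H) ^ β ≤ ((M/L) ^ ((1:ℝ)/β)) ^ β :=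
        Real.rpow_le_rpow (by positivity) hsdH hβ.le
      have h2 : ((M/L) ^ ((1:ℝ)/β)) ^ β = M/L := by
        rw [← Real.rpow_mul (by positivity), one_div, inv_mul_cancel₀ hβ.ne', Real.rpow_one]
      calc L * (Real.sqrt d * H) ^ β ≤ L * (M/L) := by
            apply mul_le_mul_of_nonneg_left (h2 ▸ h1) hL.le
        _ = M := by field_simp
    -- sign pattern
    set s : Fin d → ℝ := fun j => if xstar j ≤ 1/2 then 1 else -1 with hsdef
    have hsabs : ∀ j, |s j| = 1 := by
      intro j; rw [hsdef]; dsimp only; split <;> norm_num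
    have hs2 : ∀ j, s j * s j = 1 := by
      intro j; rw [hsdef]; dsimp only; split <;> norm_num
    -- coefficients
    set T : ∀ i : ℕ, ((Fin i → Fin d) → ℝ) := fun i j =>
      iteratedFDerivWithin ℝ i φ (unitCube d) xstar (fun m => EuclideanSpace.single (j m) 1) with hTdef
    set a : ∀ i : Fin (k+1), (Fin (i:ℕ) → Fin d) → ℝ := fun i j =>
      (H^(i:ℕ) / ((i:ℕ).factorial : ℝ)) * (∏ m, s (j m)) * T i j with hadef
    -- Taylor polynomial in terms of T
    have hTay : ∀ y : EuclideanSpace ℝ (Fin d),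
        taylorPoly d φ (unitCube d) k xstar (xstar + y) =
          ∑ i ∈ Finset.range (k+1), ((i.factorial : ℝ)⁻¹ * ∑ j : Fin i → Fin d, (∏ m, y (j m)) * T i j) := by
      intro y
      unfold taylorPoly
      apply Finset.sum_congr rfl
      intro i _
      have h1 : xstar + y - xstar = y := by abel
      rw [h1, expand d i (iteratedFDerivWithin ℝ i φ (unitCube d) xstar) y]
    -- the hypothesis for key
    have hkeyhyp : ∀ v : Fin d → ℝ, (∀ j, v j ∈ Set.Icc (0:ℝ) 1) → |∑ i, Pc d k a i v| ≤ M + M := by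
      intro v hv
      set w : EuclideanSpace ℝ (Fin d) := WithLp.toLp 2 (fun j => H * (s j * v j)) with hwdef
      have hwj : ∀ j, w j = H * (s j * v j) := fun j => rfl
      have hz : xstar + w ∈ unitCube d := by
        intro j
        have hj1 := (hxstar j).1; have hj2 := (hxstar j).2
        have hv1 := (hv j).1; have hv2 := (hv j).2
        have hwa : (xstar + w) j = xstar j + H * (s j * v j) := by
          rw [PiLp.add_apply, hwj]
        rw [hwa, hsdef]; dsimp only
        split
        · rename_i hle
          constructor
          · simp only [one_mul]; nlinarith
          · simp only [one_mul]; nlinarith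
        · rename_i hlt
          push_neg at hlt
          constructor
          · nlinarith
          · nlinarith
      have hPcTay : ∑ i, Pc d k a i v = taylorPoly d φ (unitCube d) k xstar (xstar + w) := by
        rw [hTay w, ← Fin.sum_univ_eq_sum_range
          (fun i => ((i.factorial : ℝ)⁻¹ * ∑ j : Fin i → Fin d, (∏ m, w (j m)) * T i j)) (k+1)]
        apply Finset.sum_congr rfl
        intro i _
        rw [Pc, Finset.mul_sum]
        apply Finset.sum_congr rfl
        intro j _
        have hprod : (∏ m, w (j m)) = H^(i:ℕ) * (∏ m, s (j m)) * (∏ m, v (j m)) := by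
          calc (∏ m, w (j m)) = ∏ m : Fin (i:ℕ), (H * (s (j m) * v (j m))) := by
                apply Finset.prod_congr rfl; intro m _; rw [hwj]
            _ = (∏ _m : Fin (i:ℕ), H) * ∏ m : Fin (i:ℕ), (s (j m) * v (j m)) := by
                rw [Finset.prod_mul_distrib]
            _ = H^(i:ℕ) * ((∏ m, s (j m)) * (∏ m, v (j m))) := by
                rw [Finset.prod_const, Finset.prod_mul_distrib]
                simp
            _ = H^(i:ℕ) * (∏ m, s (j m)) * (∏ m, v (j m)) := by ring
        rw [hprod, hadef]
        dsimp only
        ring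
      rw [hPcTay]
      have hTb := hT (xstar + w) hz xstar hxstar
      have hwnorm : ‖(xstar + w) - xstar‖ ≤ Real.sqrt d * H := by
        have h1 : xstar + w - xstar = w := by abel
        rw [h1]
        apply norm_le_sqrt d H hHpos.le
        intro j
        rw [hwj, abs_mul, abs_mul, hsabs, abs_of_pos hHpos]
        have hv1 := (hv j).1; have hv2 := (hv j).2
        rw [abs_of_nonneg hv1]
        nlinarith
      have hLn : L * ‖(xstar + w) - xstar‖ ^ β ≤ M := by
        calc L * ‖(xstar + w) - xstar‖ ^ β ≤ L * (Real.sqrt d * H) ^ β := by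
              apply mul_le_mul_of_nonneg_left _ hL.le
              exact Real.rpow_le_rpow (norm_nonneg _) hwnorm hβ.le
          _ ≤ M := hLHβ
      have hφz : |φ (xstar + w)| ≤ M := hmax _ hz
      have tri : |taylorPoly d φ (unitCube d) k xstar (xstar + w)|
          ≤ |φ (xstar + w)| + |φ (xstar + w) - taylorPoly d φ (unitCube d) k xstar (xstar + w)| := by
        have h := abs_add_le (φ (xstar + w)) (taylorPoly d φ (unitCube d) k xstar (xstar + w) - φ (xstar + w))
        have h2 : φ (xstar + w) + (taylorPoly d φ (unitCube d) k xstar (xstar + w) - φ (xstar + w))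
            = taylorPoly d φ (unitCube d) k xstar (xstar + w) := by ring
        rw [h2, abs_sub_comm (taylorPoly d φ (unitCube d) k xstar (xstar + w)) (φ (xstar + w))] at h
        exact h
      exact le_trans tri (add_le_add hφz (le_trans hTb hLn))
    have hPc := hkey a (M + M) hkeyhyp
    refine ⟨r, hrpos, ?_, ?_⟩
    · -- volume bound
      have hrM : c₁ * M ^ ((1:ℝ)/β) ≤ r := by
        rw [hc₁def, hrdef, mul_assoc]
        apply mul_le_mul_of_nonneg_left _ hδpos.le
        apply le_min
        · calc min (1/2:ℝ) ((1/L) ^ ((1:ℝ)/β) / Real.sqrt d) * M ^ ((1:ℝ)/β)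
              ≤ (1/2) * 1 := by
                apply mul_le_mul (min_le_left _ _)
                  (Real.rpow_le_one (abs_nonneg _) hM1 (by positivity))
                  (Real.rpow_nonneg (abs_nonneg _) _) (by norm_num)
            _ = 1/2 := mul_one _
        · calc min (1/2:ℝ) ((1/L) ^ ((1:ℝ)/β) / Real.sqrt d) * M ^ ((1:ℝ)/β)
              ≤ ((1/L) ^ ((1:ℝ)/β) / Real.sqrt d) * M ^ ((1:ℝ)/β) := by
                apply mul_le_mul_of_nonneg_right (min_le_right _ _)
                  (Real.rpow_nonneg (abs_nonneg _) _)
            _ = (M/L) ^ ((1:ℝ)/β) / Real.sqrt d := by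
                rw [div_mul_eq_mul_div, ← Real.mul_rpow (by positivity) (abs_nonneg _)]
                rw [mul_comm ((1:ℝ)/L) M, mul_one_div]
      have := hvol M hM r hrpos hrM hr1 xstar hxstar
      rw [hexp]
      exact this
    · -- plateau
      intro x hx
      have hxb := hx.1
      rw [mem_closedBall, dist_eq_norm] at hxb
      set w : EuclideanSpace ℝ (Fin d) := x - xstar with hwdef
      have hxw : xstar + w = x := by rw [hwdef]; abel
      have hTx := hT x hx.2 xstar hxstar
      rw [← hxw, hTay w] at hTx
      rw [hxw] at hTx
      -- split off the i = 0 term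
      have hsplit : ∑ i ∈ Finset.range (k+1), ((i.factorial : ℝ)⁻¹ * ∑ j : Fin i → Fin d, (∏ m, w (j m)) * T i j)
          = (∑ i ∈ Finset.range k, (((i+1).factorial : ℝ)⁻¹ * ∑ j : Fin (i+1) → Fin d, (∏ m, w (j m)) * T (i+1) j)) + φ xstar := by
        rw [Finset.sum_range_succ' (fun i => ((i.factorial : ℝ)⁻¹ * ∑ j : Fin i → Fin d, (∏ m, w (j m)) * T i j)) k]
        congr 1
        have : ∀ j : Fin 0 → Fin d, (∏ m, w (j m)) * T 0 j = T 0 j := by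
          intro j; simp
        rw [Finset.sum_congr rfl (fun j _ => this j)]
        have hu : (Finset.univ : Finset (Fin 0 → Fin d)) = {fun m => m.elim0} := by
          apply Finset.eq_singleton_iff_unique_mem.mpr
          constructor
          · exact Finset.mem_univ _
          · intro j _; funext m; exact m.elim0
        rw [hu, Finset.sum_singleton]
        simp [iteratedFDerivWithin_zero_apply]
      -- identify terms with Pc evaluated at vt
      set vt : Fin d → ℝ := fun j => s j * w j / H with hvtdef
      have hvtb : ∀ j, |vt j| ≤ δ := by
        intro j
        rw [hvtdef]
        dsimp only
        rw [abs_div, abs_mul, hsabs, one_mul, abs_of_pos hHpos]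
        rw [div_le_iff₀ hHpos]
        calc |w j| ≤ ‖w‖ := coord_le d w j
          _ ≤ r := hxb
          _ = δ * H := hrdef
      have hterm : ∀ i : Fin (k+1), Pc d k a i vt
          = (((i:ℕ).factorial : ℝ)⁻¹ * ∑ j : Fin (i:ℕ) → Fin d, (∏ m, w (j m)) * T (i:ℕ) j) := by
        intro i
        rw [Pc, Finset.mul_sum]
        apply Finset.sum_congr rfl
        intro j _
        have hprod : (∏ m, vt (j m)) = (∏ m, s (j m)) * (∏ m, w (j m)) * (H⁻¹)^(i:ℕ) := by
          calc (∏ m, vt (j m)) = ∏ m : Fin (i:ℕ), (s (j m) * w (j m) * H⁻¹) := by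
                apply Finset.prod_congr rfl; intro m _
                rw [hvtdef]; dsimp only; rw [div_eq_mul_inv]
            _ = (∏ m, (s (j m) * w (j m))) * (∏ _m : Fin (i:ℕ), H⁻¹) := Finset.prod_mul_distrib
            _ = (∏ m, s (j m)) * (∏ m, w (j m)) * (H⁻¹)^(i:ℕ) := by
                rw [Finset.prod_mul_distrib, Finset.prod_const]
                simp
        rw [hprod, hadef]
        dsimp only
        have hss : (∏ m : Fin (i:ℕ), s (j m)) * (∏ m : Fin (i:ℕ), s (j m)) = 1 := by
          rw [← Finset.prod_mul_distrib]
          rw [Finset.prod_congr rfl (fun m _ => hs2 (j m))]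
          exact Finset.prod_const_one
        have hHH : (H⁻¹)^(i:ℕ) * H^(i:ℕ) = 1 := by
          rw [← mul_pow, inv_mul_cancel₀ hHpos.ne', one_pow]
        calc (∏ m, s (j m)) * (∏ m, w (j m)) * (H⁻¹)^(i:ℕ)
              * (H^(i:ℕ) / (((i:ℕ).factorial : ℝ)) * (∏ m, s (j m)) * T (i:ℕ) j)
            = ((∏ m : Fin (i:ℕ), s (j m)) * (∏ m : Fin (i:ℕ), s (j m)))
              * ((H⁻¹)^(i:ℕ) * H^(i:ℕ))
              * ((∏ m, w (j m)) * T (i:ℕ) j) * (((i:ℕ).factorial : ℝ))⁻¹ := by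
              rw [div_eq_mul_inv]; ring
          _ = (((i:ℕ).factorial : ℝ))⁻¹ * ((∏ m, w (j m)) * T (i:ℕ) j) := by
              rw [hss, hHH]; ring
      set SS := ∑ i ∈ Finset.range k, (((Nat.factorial (i+1) : ℝ))⁻¹ * ∑ j : Fin (i+1) → Fin d, (∏ m, w (j m)) * T (i+1) j) with hSSdef
      rw [hsplit] at hTx
      -- bound |SS|
      have hsum : |SS| ≤ M/8 := by
        have hbound : ∀ i ∈ Finset.range k,
            |(((Nat.factorial (i+1) : ℝ))⁻¹ * ∑ j : Fin (i+1) → Fin d, (∏ m, w (j m)) * T (i+1) j)|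
              ≤ δ * (C * (M+M)) := by
          intro i hi
          rw [Finset.mem_range] at hi
          have hfin : i + 1 < k + 1 := by omega
          have heq := hterm ⟨i+1, hfin⟩
          rw [← heq]
          have hvteq : vt = δ • ((δ⁻¹ : ℝ) • vt) := by
            rw [smul_smul, mul_inv_cancel₀ hδpos.ne', one_smul]
          rw [hvteq, Pc_homog]
          rw [abs_mul, abs_pow, abs_of_pos hδpos]
          have hub : |Pc d k a ⟨i+1, hfin⟩ ((δ⁻¹ : ℝ) • vt)| ≤ C * (M+M) := by
            apply hPc
            intro j
            rw [Pi.smul_apply, smul_eq_mul, abs_mul, abs_inv, abs_of_pos hδpos]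
            calc δ⁻¹ * |vt j| ≤ δ⁻¹ * δ :=
                  mul_le_mul_of_nonneg_left (hvtb j) (inv_nonneg.mpr hδpos.le)
              _ = 1 := inv_mul_cancel₀ hδpos.ne'
          have hpow : δ^(((⟨i+1, hfin⟩ : Fin (k+1)) : ℕ)) ≤ δ := by
            have h2 : δ^(i+1) ≤ δ^1 := pow_le_pow_of_le_one hδpos.le hδ1 (by omega)
            rw [pow_one] at h2
            exact h2
          exact mul_le_mul hpow hub (abs_nonneg _) hδpos.le
        have h16 : 16*C*(k:ℝ)*δ ≤ 1 := by
          have hδr : δ ≤ 1/(16*C*(k:ℝ)+1) := min_le_right _ _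
          have hpos : (0:ℝ) < 16*C*(k:ℝ)+1 := by positivity
          have h1 : δ * (16*C*(k:ℝ)+1) ≤ 1 := by
            rw [← le_div_iff₀ hpos]
            exact hδr
          nlinarith [hδpos.le]
        calc |SS| ≤ ∑ i ∈ Finset.range k,
              |(((Nat.factorial (i+1) : ℝ))⁻¹ * ∑ j : Fin (i+1) → Fin d, (∏ m, w (j m)) * T (i+1) j)| := by
              rw [hSSdef]; exact Finset.abs_sum_le_sum_abs _ _
          _ ≤ (Finset.range k).card • (δ * (C * (M+M))) := Finset.sum_le_card_nsmul _ _ _ hbound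
          _ = (k:ℝ) * (δ * (C * (M+M))) := by rw [Finset.card_range, nsmul_eq_mul]
          _ ≤ M/8 := by nlinarith [mul_le_mul_of_nonneg_right h16 hM.le]
      -- bound the remainder
      have hLr : L * ‖x - xstar‖ ^ β ≤ M/8 := by
        have hrβ : ‖x - xstar‖ ^ β ≤ (δ * H) ^ β := by
          apply Real.rpow_le_rpow (norm_nonneg _) _ hβ.le
          rw [← hrdef]; exact hxb
        have hmulr : (δ * H) ^ β = δ ^ β * H ^ β := Real.mul_rpow hδpos.le hHpos.le
        have hHβ : L * H ^ β ≤ M := by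
          have h1 : H ^ β ≤ (Real.sqrt d * H) ^ β := by
            apply Real.rpow_le_rpow hHpos.le _ hβ.le
            nlinarith
          calc L * H ^ β ≤ L * (Real.sqrt d * H) ^ β :=
                mul_le_mul_of_nonneg_left h1 hL.le
            _ ≤ M := hLHβ
        have hδβ : δ ^ β ≤ δ := by
          have := Real.rpow_le_rpow_of_exponent_ge hδpos hδ1 hβ1'
          rwa [Real.rpow_one] at this
        have hδβ0 : 0 ≤ δ ^ β := Real.rpow_nonneg hδpos.le _
        calc L * ‖x - xstar‖ ^ β ≤ L * ((δ * H) ^ β) :=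
              mul_le_mul_of_nonneg_left hrβ hL.le
          _ = δ ^ β * (L * H ^ β) := by rw [hmulr]; ring
          _ ≤ δ ^ β * M := mul_le_mul_of_nonneg_left hHβ hδβ0
          _ ≤ δ * M := mul_le_mul_of_nonneg_right hδβ hM.le
          _ ≤ (1/8) * M := mul_le_mul_of_nonneg_right hδ18 hM.le
          _ = M/8 := by ring
      -- conclude
      have htri : |φ x - φ xstar| ≤ M/8 + M/8 := by
        have heq2 : φ x - φ xstar = (φ x - (SS + φ xstar)) + SS := by ring
        calc |φ x - φ xstar| = |(φ x - (SS + φ xstar)) + SS| := by rw [← heq2]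
          _ ≤ |φ x - (SS + φ xstar)| + |SS| := abs_add_le _ _
          _ ≤ M/8 + M/8 := add_le_add (le_trans hTx hLr) hsum
      have habs : M - |φ x| ≤ |φ x - φ xstar| := by
        have h1 : |φ xstar| - |φ x| ≤ |φ xstar - φ x| := abs_sub_abs_le_abs_sub _ _
        rw [abs_sub_comm] at h1
        exact h1
      linarith
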